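/- arXiv:1504.01755 — 2 statements merged into one kernel-verified Lean document; each statement's English description precedes it below -/
import Mathlib

section
/- Let d_1, d_2, d_3, d_4 ∈ ℚ and let F(x,y) = ((y + d_1x + d_2)^2 + d_3x + d_4x^2)·y + x^4 and D(x,y) = (y + d_1x + d_2)^2 + d_3x + d_4x^2. Then the point R = (0, -d_2) lies on both curves F = 0 and D = 0, and the intersection multiplicity of the curves F = 0 and D = 0 at R equals 8, provided d_2 ≠ 0 and d_3 ≠ 0. -/
set_option maxHeartbeats 1000000


open MvPolynomial

/-- The conic `D(x,y) = (y + d₁x + d₂)² + d₃x + d₄x²` as a polynomial in `ℚ[x,y]`,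
with `x = X 0`, `y = X 1`. -/
noncomputable def conicD (d₁ d₂ d₃ d₄ : ℚ) : MvPolynomial (Fin 2) ℚ :=
  (X 1 + C d₁ * X 0 + C d₂) ^ 2 + C d₃ * X 0 + C d₄ * (X 0) ^ 2

/-- The quartic `F(x,y) = D(x,y)·y + x⁴` as a polynomial in `ℚ[x,y]`. -/
noncomputable def quarticF (d₁ d₂ d₃ d₄ : ℚ) : MvPolynomial (Fin 2) ℚ :=
  conicD d₁ d₂ d₃ d₄ * X 1 + (X 0) ^ 4

/-- The maximal ideal of `ℚ[x,y]` corresponding to the point `R = (0, -d₂)`. -/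
noncomputable def maxIdealR (d₂ : ℚ) : Ideal (MvPolynomial (Fin 2) ℚ) :=
  Ideal.span {X 0, X 1 + C d₂}

lemma x_mem_max (d₂ : ℚ) : (X 0 : MvPolynomial (Fin 2) ℚ) ∈ maxIdealR d₂ :=
  Ideal.subset_span (Set.mem_insert _ _)

lemma y_mem_max (d₂ : ℚ) : (X 1 + C d₂ : MvPolynomial (Fin 2) ℚ) ∈ maxIdealR d₂ :=
  Ideal.subset_span (Set.mem_insert_of_mem _ rfl)

lemma mk_eq_eval (d₂ : ℚ) (p : MvPolynomial (Fin 2) ℚ) :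
    Ideal.Quotient.mk (maxIdealR d₂) p
      = algebraMap ℚ _ (eval (fun i => if i = 0 then 0 else -d₂) p) := by
  have h : (Ideal.Quotient.mk (maxIdealR d₂))
      = ((algebraMap ℚ (MvPolynomial (Fin 2) ℚ ⧸ maxIdealR d₂)).comp
          (eval (fun i => if i = 0 then 0 else -d₂))) := by
    apply MvPolynomial.ringHom_ext
    · intro q
      simp [IsScalarTower.algebraMap_eq ℚ (MvPolynomial (Fin 2) ℚ)
        (MvPolynomial (Fin 2) ℚ ⧸ maxIdealR d₂)]
    · intro i
      fin_cases i
      · have : (Ideal.Quotient.mk (maxIdealR d₂)) (X 0) = 0 :=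
          (Ideal.Quotient.eq_zero_iff_mem).2 (x_mem_max d₂)
        simp [this]
      · have : (Ideal.Quotient.mk (maxIdealR d₂)) (X 1 + C d₂) = 0 :=
          (Ideal.Quotient.eq_zero_iff_mem).2 (y_mem_max d₂)
        have h1 : (Ideal.Quotient.mk (maxIdealR d₂)) (X 1)
            = - (Ideal.Quotient.mk (maxIdealR d₂)) (C d₂) := by
          rw [eq_neg_iff_add_eq_zero, ← map_add]; exact this
        simp only [RingHom.coe_comp, Function.comp_apply, eval_X, Fin.mk_one]
        rw [h1]
        simp [IsScalarTower.algebraMap_eq ℚ (MvPolynomial (Fin 2) ℚ)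
          (MvPolynomial (Fin 2) ℚ ⧸ maxIdealR d₂)]
  exact DFunLike.congr_fun h p

lemma mem_maxIdealR (d₂ : ℚ) (p : MvPolynomial (Fin 2) ℚ)
    (hp : eval (fun i => if i = 0 then 0 else -d₂) p = 0) : p ∈ maxIdealR d₂ := by
  rw [← Ideal.Quotient.eq_zero_iff_mem, mk_eq_eval, hp, map_zero]

lemma inv_mem_of_nilpotent_diff {A : Type*} [CommRing A] [Algebra ℚ A]
    (S : Subalgebra ℚ A) {z : A} (hz : z ∈ S) {c : ℚ} (hc : c ≠ 0)
    (hn : IsNilpotent (z - algebraMap ℚ A c)) : ∃ w ∈ S, z * w = 1 := by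
  obtain ⟨k, hk⟩ := hn
  set ν : A := 1 - c⁻¹ • z with hν
  have hνk : ν ^ k = 0 := by
    have : ν = (-c⁻¹) • (z - algebraMap ℚ A c) := by
      rw [Algebra.algebraMap_eq_smul_one]
      rw [hν, smul_sub, smul_smul, show -c⁻¹ * c = -1 by field_simp]
      simp [sub_eq_add_neg, add_comm]
    rw [this, smul_pow, hk, smul_zero]
  refine ⟨c⁻¹ • (∑ i ∈ Finset.range k, ν ^ i), ?_, ?_⟩
  · exact S.smul_mem (sum_mem fun i _ => pow_mem (S.sub_mem (one_mem S) (S.smul_mem hz _)) i) _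
  · have key : (1 - ν) * (∑ i ∈ Finset.range k, ν ^ i) = 1 - ν ^ k := by
      have h := geom_sum_mul ν k
      calc (1 - ν) * (∑ i ∈ Finset.range k, ν ^ i)
          = -((∑ i ∈ Finset.range k, ν ^ i) * (ν - 1)) := by ring
        _ = -(ν ^ k - 1) := by rw [h]
        _ = 1 - ν ^ k := by ring
    have h1ν : (1 : A) - ν = c⁻¹ • z := by rw [hν]; ring_nf
    calc z * (c⁻¹ • (∑ i ∈ Finset.range k, ν ^ i))
        = (c⁻¹ • z) * (∑ i ∈ Finset.range k, ν ^ i) := by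
          rw [mul_smul_comm, smul_mul_assoc]
      _ = 1 - ν ^ k := by rw [← h1ν, key]
      _ = 1 := by rw [hνk, sub_zero]

noncomputable def xiP (d₃ d₄ : ℚ) : Polynomial ℚ :=
  -((Polynomial.C d₃)^5 * Polynomial.X^2)
    - Polynomial.C d₄ * (Polynomial.C d₃)^9 * Polynomial.X^4
    - 2*(Polynomial.C d₄)^2*(Polynomial.C d₃)^13 * Polynomial.X^6

noncomputable def etaP (d₁ d₂ d₃ d₄ : ℚ) : Polynomial ℚ :=
  (Polynomial.C d₃)^3 * Polynomial.X - Polynomial.C d₁ * xiP d₃ d₄ - Polynomial.C d₂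

theorem finrank_aux (d₁ d₂ d₃ d₄ : ℚ) (h2 : d₂ ≠ 0) (h3 : d₃ ≠ 0)
    (hm : (maxIdealR d₂).IsPrime) :
    Module.finrank ℚ
      (Localization (@Ideal.primeCompl _ _ (maxIdealR d₂) hm) ⧸
        Ideal.span {algebraMap (MvPolynomial (Fin 2) ℚ)
            (Localization (@Ideal.primeCompl _ _ (maxIdealR d₂) hm)) (quarticF d₁ d₂ d₃ d₄),
          algebraMap (MvPolynomial (Fin 2) ℚ)
            (Localization (@Ideal.primeCompl _ _ (maxIdealR d₂) hm)) (conicD d₁ d₂ d₃ d₄)}) = 8 := by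
  haveI := hm
  set M := @Ideal.primeCompl _ _ (maxIdealR d₂) hm with hM
  set L := Localization M with hLdef
  letI : CommRing L := inferInstanceAs (CommRing (Localization M))
  letI : Algebra ℚ L := inferInstanceAs (Algebra ℚ (Localization M))
  set J : Ideal L := Ideal.span {algebraMap (MvPolynomial (Fin 2) ℚ) L (quarticF d₁ d₂ d₃ d₄),
      algebraMap (MvPolynomial (Fin 2) ℚ) L (conicD d₁ d₂ d₃ d₄)} with hJdef
  set π : MvPolynomial (Fin 2) ℚ →ₐ[ℚ] (L ⧸ J) :=
    (Ideal.Quotient.mkₐ ℚ J).comp (IsScalarTower.toAlgHom ℚ (MvPolynomial (Fin 2) ℚ) L)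
    with hπdef
  have hπ : ∀ p, π p = Ideal.Quotient.mk J (algebraMap (MvPolynomial (Fin 2) ℚ) L p) :=
    fun p => rfl
  have hπC : ∀ q : ℚ, π (C q) = algebraMap ℚ (L ⧸ J) q := fun q => by
    rw [← MvPolynomial.algebraMap_eq]; exact π.commutes q
  have hπF : π (quarticF d₁ d₂ d₃ d₄) = 0 := by
    rw [hπ, Ideal.Quotient.eq_zero_iff_mem, hJdef]
    exact Ideal.subset_span (Set.mem_insert _ _)
  have hπD : π (conicD d₁ d₂ d₃ d₄) = 0 := by
    rw [hπ, Ideal.Quotient.eq_zero_iff_mem, hJdef]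
    exact Ideal.subset_span (Set.mem_insert_of_mem _ rfl)
  set xb := π (X 0) with hxb
  set ub := π (X 1 + C d₁ * X 0 + C d₂) with hub
  set a := algebraMap ℚ (L ⧸ J) d₃ with ha
  set b := algebraMap ℚ (L ⧸ J) d₄ with hb
  have hxb4 : xb ^ 4 = 0 := by
    have h : π (quarticF d₁ d₂ d₃ d₄)
        = π (conicD d₁ d₂ d₃ d₄) * π (X 1) + xb ^ 4 := by
      rw [hxb, quarticF, map_add, map_mul, map_pow]
    rw [hπF, hπD] at h
    rw [h]; ring
  have hDrel : ub ^ 2 + a * xb + b * xb ^ 2 = 0 := by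
    have h : π (conicD d₁ d₂ d₃ d₄) = ub ^ 2 + a * xb + b * xb ^ 2 := by
      rw [hub, hxb, ha, hb, conicD]
      simp only [map_add, map_mul, map_pow, hπC]
    rw [hπD] at h; exact h.symm
  have hu2 : ub ^ 2 = -(a * xb + b * xb ^ 2) := by linear_combination hDrel
  have hu8 : ub ^ 8 = 0 := by
    calc ub ^ 8 = (ub ^ 2) ^ 4 := by ring
      _ = (-(a * xb + b * xb ^ 2)) ^ 4 := by rw [hu2]
      _ = xb ^ 4 * (a + b * xb) ^ 4 := by ring
      _ = 0 := by rw [hxb4]; ring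
  -- the model ring T = ℚ[t]/(t⁸)
  have hroot8 : (AdjoinRoot.root ((Polynomial.X : Polynomial ℚ) ^ 8)) ^ 8 = 0 := by
    rw [← AdjoinRoot.mk_X, ← map_pow, AdjoinRoot.mk_eq_zero]
  set φ : AdjoinRoot ((Polynomial.X : Polynomial ℚ) ^ 8) →ₐ[ℚ] (L ⧸ J) :=
    AdjoinRoot.liftAlgHom _ (Algebra.ofId ℚ _) ub (by rw [Polynomial.eval₂_X_pow]; exact hu8) with hφdef
  have hφroot : φ (AdjoinRoot.root ((Polynomial.X : Polynomial ℚ) ^ 8)) = ub := by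
    rw [hφdef, AdjoinRoot.liftAlgHom_root]
  have hubS : ub ∈ φ.range := ⟨AdjoinRoot.root _, hφroot⟩
  have keyz : a ^ 5 * xb + a ^ 4 * ub ^ 2 + a ^ 2 * b * ub ^ 4 + 2 * b ^ 2 * ub ^ 6 = 0 := by
    calc a^5*xb + a^4*ub^2 + a^2*b*ub^4 + 2*b^2*ub^6
        = a^5*xb + a^4*(ub^2) + a^2*b*(ub^2)^2 + 2*b^2*(ub^2)^3 := by ring
      _ = a^5*xb + a^4*(-(a*xb + b*xb^2)) + a^2*b*(-(a*xb + b*xb^2))^2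
          + 2*b^2*(-(a*xb + b*xb^2))^3 := by rw [hu2]
      _ = xb^4 * (-5*a^2*b^3 - 6*a*b^4*xb - 2*b^5*xb^2) := by ring
      _ = 0 := by rw [hxb4]; ring
  have hxbS : xb ∈ φ.range := by
    set w : AdjoinRoot ((Polynomial.X : Polynomial ℚ) ^ 8) :=
      -(algebraMap ℚ _ (d₃^4) * (AdjoinRoot.root _)^2
        + algebraMap ℚ _ (d₃^2*d₄) * (AdjoinRoot.root _)^4
        + algebraMap ℚ _ (2*d₄^2) * (AdjoinRoot.root _)^6) with hw
    have hφw : φ w = a ^ 5 * xb := by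
      rw [hw]
      simp only [map_neg, map_add, map_mul, map_pow, map_ofNat, hφroot, AlgHom.commutes]
      rw [← ha, ← hb]
      linear_combination -keyz
    refine (AlgHom.mem_range φ).2 ⟨algebraMap ℚ _ ((d₃^5)⁻¹) * w, ?_⟩
    rw [map_mul, AlgHom.commutes, hφw, ha, ← map_pow]
    have hc : (algebraMap ℚ (L ⧸ J)) ((d₃^5)⁻¹) * (algebraMap ℚ (L ⧸ J)) (d₃^5) = 1 := by
      rw [← map_mul, inv_mul_cancel₀ (pow_ne_zero 5 h3), map_one]
    linear_combination xb * hc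
  have hybS : π (X 1) ∈ φ.range := by
    have h : π (X 1) = ub - algebraMap ℚ _ d₁ * xb - algebraMap ℚ _ d₂ := by
      rw [hub, hxb, map_add, map_add, map_mul, hπC, hπC]; ring
    rw [h]
    exact sub_mem (sub_mem hubS (mul_mem (Subalgebra.algebraMap_mem _ _) hxbS))
      (Subalgebra.algebraMap_mem _ _)
  have hπrange : ∀ p, π p ∈ φ.range := by
    intro p
    induction p using MvPolynomial.induction_on with
    | C q => rw [hπC]; exact Subalgebra.algebraMap_mem _ q
    | add p q hp hq => rw [map_add]; exact add_mem hp hq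
    | mul_X p i hp =>
        rw [map_mul]
        refine mul_mem hp ?_
        fin_cases i
        · exact hxbS
        · exact hybS
  have hnil : ∀ t ∈ maxIdealR d₂, IsNilpotent (π t) := by
    intro t ht
    have h1 : π t ∈ Ideal.map π (maxIdealR d₂) := Ideal.mem_map_of_mem _ ht
    have h2 : Ideal.map π (maxIdealR d₂) ≤ nilradical _ := by
      rw [maxIdealR, Ideal.map_span]
      refine Ideal.span_le.2 ?_
      rintro z ⟨g, hg, rfl⟩
      simp only [Set.mem_insert_iff, Set.mem_singleton_iff] at hg
      rcases hg with rfl | rfl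
      · exact mem_nilradical.2 ⟨4, hxb4⟩
      · have h : π (X 1 + C d₂) = ub - algebraMap ℚ _ d₁ * xb := by
          rw [hub, hxb, map_add, map_add, map_add, map_mul, hπC, hπC]; ring
        have : IsNilpotent (π (X 1 + C d₂)) := by
          rw [h]
          exact Commute.isNilpotent_sub
            (Commute.all ub ((algebraMap ℚ (L ⧸ J)) d₁ * xb)) ⟨8, hu8⟩
            ⟨4, by linear_combination ((algebraMap ℚ (L ⧸ J)) d₁)^4 * hxb4⟩
        exact mem_nilradical.2 this
    exact mem_nilradical.1 (h2 h1)
  have hne : ∀ s : M, eval (fun i : Fin 2 => if i = 0 then 0 else -d₂) (s : MvPolynomial (Fin 2) ℚ) ≠ 0 := by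
    intro s hzero
    exact s.2 (mem_maxIdealR d₂ _ hzero)
  have hinvS : ∀ s : M, ∃ w' ∈ φ.range, π (s : MvPolynomial (Fin 2) ℚ) * w' = 1 := by
    intro s
    refine inv_mem_of_nilpotent_diff _ (hπrange _) (hne s) ?_
    have h : π (s : MvPolynomial (Fin 2) ℚ)
        - algebraMap ℚ _ (eval (fun i : Fin 2 => if i = 0 then 0 else -d₂) (s : MvPolynomial (Fin 2) ℚ))
        = π ((s : MvPolynomial (Fin 2) ℚ)
            - C (eval (fun i : Fin 2 => if i = 0 then 0 else -d₂) (s : MvPolynomial (Fin 2) ℚ))) := by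
      rw [map_sub, hπC]
    rw [h]
    exact hnil _ (mem_maxIdealR d₂ _ (by rw [map_sub, eval_C, sub_self]))
  have hsurj : Function.Surjective φ := by
    intro z
    obtain ⟨w0, rfl⟩ := Ideal.Quotient.mk_surjective (I := J) z
    obtain ⟨⟨r, s⟩, hrs⟩ := IsLocalization.surj (M := M) (S := L) w0
    have h1 : Ideal.Quotient.mk J w0 * π (s : MvPolynomial (Fin 2) ℚ) = π r := by
      rw [hπ, hπ, ← map_mul]; exact congrArg _ hrs
    obtain ⟨w', hw'S, hw'⟩ := hinvS s
    have h2 : Ideal.Quotient.mk J w0 = π r * w' := by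
      calc Ideal.Quotient.mk J w0 = Ideal.Quotient.mk J w0 * 1 := by ring
        _ = Ideal.Quotient.mk J w0 * (π (s : MvPolynomial (Fin 2) ℚ) * w') := by rw [← hw']
        _ = Ideal.Quotient.mk J w0 * π (s : MvPolynomial (Fin 2) ℚ) * w' := by ring
        _ = π r * w' := by rw [h1]
    rw [h2]
    exact (AlgHom.mem_range φ).1 (mul_mem (hπrange r) hw'S)
  -- the evaluation map ψ to  ℚ[t]/(t⁸)
  set mk8 := AdjoinRoot.mk ((Polynomial.X : Polynomial ℚ) ^ 8) with hmk8
  set ψ : MvPolynomial (Fin 2) ℚ →ₐ[ℚ] AdjoinRoot ((Polynomial.X : Polynomial ℚ) ^ 8) :=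
    aeval (fun i => if i = 0 then mk8 (xiP d₃ d₄) else mk8 (etaP d₁ d₂ d₃ d₄)) with hψdef
  have hψx : ψ (X 0) = mk8 (xiP d₃ d₄) := by rw [hψdef]; simp
  have hψy : ψ (X 1) = mk8 (etaP d₁ d₂ d₃ d₄) := by rw [hψdef]; simp
  have hψalg : ∀ q : ℚ, ψ (C q) = algebraMap ℚ _ q := fun q => by
    rw [← MvPolynomial.algebraMap_eq]; exact ψ.commutes q
  have hmkC : ∀ q : ℚ, mk8 (Polynomial.C q) = algebraMap ℚ _ q := fun q => rfl
  have hψCmk : ∀ q : ℚ, ψ (C q) = mk8 (Polynomial.C q) := fun q => by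
    rw [hψalg, hmkC]
  have hψD : ψ (conicD d₁ d₂ d₃ d₄) = 0 := by
    have h : ψ (conicD d₁ d₂ d₃ d₄)
        = mk8 ((etaP d₁ d₂ d₃ d₄ + Polynomial.C d₁ * xiP d₃ d₄ + Polynomial.C d₂) ^ 2
            + Polynomial.C d₃ * xiP d₃ d₄ + Polynomial.C d₄ * (xiP d₃ d₄) ^ 2) := by
      rw [conicD]
      simp only [map_add, map_mul, map_pow, hψx, hψy, hψCmk]
    rw [h, hmk8, AdjoinRoot.mk_eq_zero]
    refine ⟨5*(Polynomial.C d₄)^3*(Polynomial.C d₃)^18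
      + 4*(Polynomial.C d₄)^4*(Polynomial.C d₃)^22 * Polynomial.X^2
      + 4*(Polynomial.C d₄)^5*(Polynomial.C d₃)^26 * Polynomial.X^4, ?_⟩
    rw [etaP, xiP]; ring
  have hxi4 : mk8 ((xiP d₃ d₄) ^ 4) = 0 := by
    rw [hmk8, AdjoinRoot.mk_eq_zero]
    exact ⟨(-(Polynomial.C d₃)^5 - Polynomial.C d₄*(Polynomial.C d₃)^9*Polynomial.X^2
      - 2*(Polynomial.C d₄)^2*(Polynomial.C d₃)^13*Polynomial.X^4)^4, by rw [xiP]; ring⟩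
  have hψF : ψ (quarticF d₁ d₂ d₃ d₄) = 0 := by
    have h : ψ (quarticF d₁ d₂ d₃ d₄) = ψ (conicD d₁ d₂ d₃ d₄) * ψ (X 1) + (ψ (X 0)) ^ 4 := by
      rw [quarticF, map_add, map_mul, map_pow]
    rw [hψD, hψx, ← map_pow, hxi4] at h
    rw [h]; ring
  have hnilT : ∀ t ∈ maxIdealR d₂, IsNilpotent (ψ t) := by
    intro t ht
    have h1 : ψ t ∈ Ideal.map ψ (maxIdealR d₂) := Ideal.mem_map_of_mem _ ht
    have hsub : Ideal.map ψ (maxIdealR d₂) ≤ nilradical _ := by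
      rw [maxIdealR, Ideal.map_span]
      refine Ideal.span_le.2 ?_
      rintro z ⟨g, hg, rfl⟩
      simp only [Set.mem_insert_iff, Set.mem_singleton_iff] at hg
      rcases hg with rfl | rfl
      · refine mem_nilradical.2 ⟨4, ?_⟩
        rw [hψx, ← map_pow]; exact hxi4
      · have e : etaP d₁ d₂ d₃ d₄ + Polynomial.C d₂
            = (Polynomial.C d₃)^3 * Polynomial.X - Polynomial.C d₁ * xiP d₃ d₄ := by
          rw [etaP]; ring
        have h : ψ (X 1 + C d₂)
            = mk8 ((Polynomial.C d₃)^3 * Polynomial.X) - mk8 (Polynomial.C d₁ * xiP d₃ d₄) := by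
          rw [map_add, hψy, hψCmk, ← map_add, e, map_sub]
        refine mem_nilradical.2 ?_
        rw [h]
        refine Commute.isNilpotent_sub (Commute.all _ _) ⟨8, ?_⟩ ⟨4, ?_⟩
        · rw [← map_pow, hmk8, AdjoinRoot.mk_eq_zero]
          exact ⟨(Polynomial.C d₃)^24, by ring⟩
        · rw [← map_pow, hmk8, AdjoinRoot.mk_eq_zero]
          exact ⟨(Polynomial.C d₁)^4 * (-(Polynomial.C d₃)^5
            - Polynomial.C d₄*(Polynomial.C d₃)^9*Polynomial.X^2
            - 2*(Polynomial.C d₄)^2*(Polynomial.C d₃)^13*Polynomial.X^4)^4, by rw [xiP]; ring⟩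
    exact mem_nilradical.1 (hsub h1)
  have hψunit : ∀ s : M, IsUnit (ψ.toRingHom (s : MvPolynomial (Fin 2) ℚ)) := by
    intro s
    have hc := hne s
    set c : ℚ := eval (fun i : Fin 2 => if i = 0 then 0 else -d₂) (s : MvPolynomial (Fin 2) ℚ)
      with hcdef
    have hd : ψ (s : MvPolynomial (Fin 2) ℚ)
        = algebraMap ℚ _ c + (ψ (s : MvPolynomial (Fin 2) ℚ) - algebraMap ℚ _ c) := by ring
    have hnilp : IsNilpotent (ψ (s : MvPolynomial (Fin 2) ℚ)
        - algebraMap ℚ (AdjoinRoot ((Polynomial.X : Polynomial ℚ) ^ 8)) c) := by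
      have h : ψ (s : MvPolynomial (Fin 2) ℚ)
          - algebraMap ℚ (AdjoinRoot ((Polynomial.X : Polynomial ℚ) ^ 8)) c
          = ψ ((s : MvPolynomial (Fin 2) ℚ) - C c) := by rw [map_sub, hψalg]
      rw [h]
      exact hnilT _ (mem_maxIdealR d₂ _ (by rw [map_sub, eval_C, hcdef, sub_self]))
    show IsUnit (ψ (s : MvPolynomial (Fin 2) ℚ))
    rw [hd]
    exact IsNilpotent.isUnit_add_left_of_commute hnilp
      (RingHom.isUnit_map (algebraMap ℚ (AdjoinRoot ((Polynomial.X : Polynomial ℚ) ^ 8)))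
        (isUnit_iff_ne_zero.2 hc)) (Commute.all _ _)
  set Ψ : L →+* AdjoinRoot ((Polynomial.X : Polynomial ℚ) ^ 8) :=
    IsLocalization.lift (M := M) (S := L) hψunit with hΨdef
  have hΨalg : ∀ p, Ψ (algebraMap (MvPolynomial (Fin 2) ℚ) L p) = ψ p := fun p => by
    rw [hΨdef]; exact IsLocalization.lift_eq hψunit p
  have hker : ∀ z ∈ J, Ψ z = 0 := by
    have hle : J ≤ RingHom.ker Ψ := by
      rw [hJdef]
      refine Ideal.span_le.2 ?_
      rintro z hz
      simp only [Set.mem_insert_iff, Set.mem_singleton_iff] at hz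
      rcases hz with rfl | rfl
      · simp only [SetLike.mem_coe, RingHom.mem_ker]
        rw [hΨalg, hψF]
      · simp only [SetLike.mem_coe, RingHom.mem_ker]
        rw [hΨalg, hψD]
    exact fun z hz => hle hz
  set Ψq : (L ⧸ J) →+* AdjoinRoot ((Polynomial.X : Polynomial ℚ) ^ 8) :=
    Ideal.Quotient.lift J Ψ hker with hΨqdef
  have hΨqπ : ∀ p, Ψq (π p) = ψ p := fun p => by
    rw [hπ, hΨqdef, Ideal.Quotient.lift_mk]
    exact hΨalg p
  set Ψqa : (L ⧸ J) →ₐ[ℚ] AdjoinRoot ((Polynomial.X : Polynomial ℚ) ^ 8) :=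
    { Ψq with
      commutes' := fun q => by
        show Ψq (algebraMap ℚ (L ⧸ J) q) = algebraMap ℚ _ q
        rw [← hπC q, hΨqπ, hψalg] } with hΨqadef
  have hΨqa : ∀ z, Ψqa z = Ψq z := fun z => rfl
  have hΨqub : Ψqa ub = algebraMap ℚ _ (d₃^3) * AdjoinRoot.root ((Polynomial.X : Polynomial ℚ)^8) := by
    rw [hΨqa, hub, hΨqπ]
    rw [map_add, map_add, map_mul, hψx, hψy, hψCmk d₁, hψCmk d₂, ← map_mul, ← map_add, ← map_add]
    have e : etaP d₁ d₂ d₃ d₄ + Polynomial.C d₁ * xiP d₃ d₄ + Polynomial.C d₂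
        = (Polynomial.C d₃)^3 * Polynomial.X := by rw [etaP]; ring
    rw [e, map_mul, map_pow, hmkC, ← map_pow, hmk8, AdjoinRoot.mk_X]
  set τ : AdjoinRoot ((Polynomial.X : Polynomial ℚ) ^ 8) →ₐ[ℚ]
      AdjoinRoot ((Polynomial.X : Polynomial ℚ) ^ 8) :=
    AdjoinRoot.liftAlgHom _ (Algebra.ofId ℚ _) (algebraMap ℚ _ ((d₃^3)⁻¹) * AdjoinRoot.root _)
      (by rw [Polynomial.eval₂_X_pow, mul_pow, hroot8, mul_zero]) with hτdef
  have hτroot : τ (AdjoinRoot.root ((Polynomial.X : Polynomial ℚ)^8))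
      = algebraMap ℚ _ ((d₃^3)⁻¹) * AdjoinRoot.root ((Polynomial.X : Polynomial ℚ)^8) := by
    rw [hτdef, AdjoinRoot.liftAlgHom_root]
  have hext : τ.comp (Ψqa.comp φ) = AlgHom.id ℚ _ := by
    apply AdjoinRoot.algHom_ext
    rw [AlgHom.comp_apply, AlgHom.comp_apply, hφroot, AlgHom.id_apply]
    rw [hΨqub, map_mul, τ.commutes, hτroot, ← mul_assoc, ← map_mul,
      mul_inv_cancel₀ (pow_ne_zero 3 h3), map_one, one_mul]
  have hinj : Function.Injective φ := by
    intro s t hst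
    have e1 : τ (Ψqa (φ s)) = s := DFunLike.congr_fun hext s
    have e2 : τ (Ψqa (φ t)) = t := DFunLike.congr_fun hext t
    rw [← e1, ← e2, hst]
  have equiv := AlgEquiv.ofBijective φ ⟨hinj, hsurj⟩
  have hfr : Module.finrank ℚ (AdjoinRoot ((Polynomial.X : Polynomial ℚ)^8))
      = Module.finrank ℚ (L ⧸ J) := equiv.toLinearEquiv.finrank_eq
  rw [← hfr]
  rw [(AdjoinRoot.powerBasis (f := (Polynomial.X : Polynomial ℚ)^8)
    (pow_ne_zero _ Polynomial.X_ne_zero)).finrank]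
  simp [AdjoinRoot.powerBasis]

/-- The point `R = (0, -d₂)` lies on both curves `F = 0` and `D = 0`, and
(for `d₂ ≠ 0`, `d₃ ≠ 0`) the intersection multiplicity of the two curves at `R`, i.e.
the `ℚ`-dimension of the localization of `ℚ[x,y]/(F,D)` at the maximal ideal of `R`,
equals 8. -/
theorem stmt_14 (d₁ d₂ d₃ d₄ : ℚ) (h2 : d₂ ≠ 0) (h3 : d₃ ≠ 0)
    (hm : (maxIdealR d₂).IsPrime) :
    (eval (fun i => if i = 0 then 0 else -d₂) (quarticF d₁ d₂ d₃ d₄) = 0) ∧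
    (eval (fun i => if i = 0 then 0 else -d₂) (conicD d₁ d₂ d₃ d₄) = 0) ∧
    Module.finrank ℚ
      (Localization (@Ideal.primeCompl _ _ (maxIdealR d₂) hm) ⧸
        Ideal.span {algebraMap (MvPolynomial (Fin 2) ℚ)
            (Localization (@Ideal.primeCompl _ _ (maxIdealR d₂) hm)) (quarticF d₁ d₂ d₃ d₄),
          algebraMap (MvPolynomial (Fin 2) ℚ)
            (Localization (@Ideal.primeCompl _ _ (maxIdealR d₂) hm)) (conicD d₁ d₂ d₃ d₄)}) = 8 := by
  have hD : eval (fun i => if i = 0 then 0 else -d₂) (conicD d₁ d₂ d₃ d₄) = 0 := by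
    simp [conicD]
  refine ⟨?_, hD, finrank_aux d₁ d₂ d₃ d₄ h2 h3 hm⟩
  rw [quarticF, map_add, map_mul, hD]
  simp
end

section
/- Let a_1, a_2 ∈ ℚ with d := a_1^2 + a_1a_2 + a_2^2 ≠ 0, and define d_1 = (3/(2d))(a_1^3 + a_1^2a_2 + a_1a_2^2 + a_2^3), d_2 = -(3/(2d))a_1^3a_2^3, d_3 = -(3/(4d))a_1^3a_2^3(a_1 + a_2), d_4 = (3/(4d))(a_1^4 + a_1^3a_2 + a_1^2a_2^2 + a_1a_2^3 + a_2^4), and F(x,y) = ((y + d_1x + d_2)^2 + d_3x + d_4x^2)y + x^4. Then for i = 1, 2: F(a_i^3, y) = (y + a_i^4)^3 as polynomials in y. -/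
open Polynomial

lemma cube_lemma (c e k r : ℚ) (h1 : 2 * c = 3 * r) (h2 : c ^ 2 + e = 3 * r ^ 2)
    (h3 : k = r ^ 3) :
    ((X + C c) ^ 2 + C e) * X + C k = (X + C r) ^ 3 := by
  have H1 : 2 * (C c : ℚ[X]) = 3 * C r := by
    have := congrArg (C : ℚ → ℚ[X]) h1
    simpa [map_ofNat C] using this
  have H2 : (C c : ℚ[X]) ^ 2 + C e = 3 * (C r) ^ 2 := by
    have := congrArg (C : ℚ → ℚ[X]) h2
    simpa [map_ofNat C] using this
  have H3 : (C k : ℚ[X]) = (C r) ^ 3 := by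
    have := congrArg (C : ℚ → ℚ[X]) h3
    simpa using this
  linear_combination X ^ 2 * H1 + X * H2 + H3

/-- With `d = a₁² + a₁a₂ + a₂² ≠ 0` and `d₁, d₂, d₃, d₄` as in Example 6.2,
for `F(x,y) = ((y + d₁x + d₂)² + d₃x + d₄x²)y + x⁴` we have
`F(aᵢ³, y) = (y + aᵢ⁴)³` in `ℚ[y]` for `i = 1, 2`. -/
theorem stmt_18 (a₁ a₂ : ℚ) (d : ℚ) (hd' : d = a₁ ^ 2 + a₁ * a₂ + a₂ ^ 2) (hd : d ≠ 0)
    (d₁ d₂ d₃ d₄ : ℚ)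
    (h₁ : d₁ = 3 / (2 * d) * (a₁ ^ 3 + a₁ ^ 2 * a₂ + a₁ * a₂ ^ 2 + a₂ ^ 3))
    (h₂ : d₂ = -(3 / (2 * d)) * a₁ ^ 3 * a₂ ^ 3)
    (h₃ : d₃ = -(3 / (4 * d)) * a₁ ^ 3 * a₂ ^ 3 * (a₁ + a₂))
    (h₄ : d₄ = 3 / (4 * d) * (a₁ ^ 4 + a₁ ^ 3 * a₂ + a₁ ^ 2 * a₂ ^ 2 + a₁ * a₂ ^ 3 + a₂ ^ 4)) :
    (((X + C (d₁ * a₁ ^ 3 + d₂)) ^ 2 + C (d₃ * a₁ ^ 3 + d₄ * (a₁ ^ 3) ^ 2)) * X +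
        C ((a₁ ^ 3) ^ 4) = (X + C (a₁ ^ 4)) ^ 3) ∧
    (((X + C (d₁ * a₂ ^ 3 + d₂)) ^ 2 + C (d₃ * a₂ ^ 3 + d₄ * (a₂ ^ 3) ^ 2)) * X +
        C ((a₂ ^ 3) ^ 4) = (X + C (a₂ ^ 4)) ^ 3) := by
  subst h₁ h₂ h₃ h₄
  constructor <;>
  · apply cube_lemma <;>
    · first
      | (field_simp; subst hd'; ring)
      | ring
end
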